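/- Consider the weighted bipartite instance with facilities f_1, f_2, f_3, f_4 and two clients a, b, where d(f_1,a) = d(f_1,b) = d(f_2,a) = d(f_2,b) = c and d(f_3,a) = d(f_3,b) = d(f_4,a) = d(f_4,b) = 1, for a constant c > 1. Facility colors: f_1 ∈ F_r ∩ F_b, f_2 ∈ F_g ∩ F_y, f_3 ∈ F_r ∩ F_y, f_4 ∈ F_g ∩ F_b, with thresholds r_r = r_g = r_b = r_y = 1 and k = 2. Then: (i) S = {f_1, f_2} and S* = {f_3, f_4} are the only feasible solutions of size 2; (ii) no single swap from S (replacing one facility of S by one facility not in S) yields a feasible solution; (iii) cost(S)/cost(S*) = c. Hence single-swap local search starting at S is stuck at a feasible solution whose cost is c times the optimum, for arbitrarily large c. -/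
import Mathlib


/-- Distances in the bad example for single-swap local search: facilities `0,1`
(= f₁,f₂) are at distance `c` from both clients, facilities `2,3` (= f₃,f₄)
are at distance `1`. -/
noncomputable def dist9 (c : ℝ) : Fin 4 → Fin 2 → ℝ := fun f _ => if (f : ℕ) < 2 then c else 1

/-- Connection cost of a center set `S`. -/
noncomputable def cost9 (c : ℝ) (S : Finset (Fin 4)) : ℝ :=
  ∑ v : Fin 2, sInf ((fun f => dist9 c f v) '' ↑S)

/-- Feasibility: at least one center from each of the groups
`F_r = {f₁,f₃} = {0,2}`, `F_g = {f₂,f₄} = {1,3}`, `F_b = {f₁,f₄} = {0,3}`,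
`F_y = {f₂,f₃} = {1,2}`. -/
def feas9 (S : Finset (Fin 4)) : Prop :=
  1 ≤ (S ∩ ({0, 2} : Finset (Fin 4))).card ∧
  1 ≤ (S ∩ ({1, 3} : Finset (Fin 4))).card ∧
  1 ≤ (S ∩ ({0, 3} : Finset (Fin 4))).card ∧
  1 ≤ (S ∩ ({1, 2} : Finset (Fin 4))).card

/-- In the example: (i) `{f₁,f₂}` and `{f₃,f₄}` are the only feasible solutions of
size `2`; (ii) no single swap from `{f₁,f₂}` yields a feasible set; (iii)
`cost {f₁,f₂} = c ⬝ cost {f₃,f₄}`. Hence single-swap local search is stuck at a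
solution whose cost is `c` times the optimum. -/
theorem stmt_9 (c : ℝ) (hc : 1 < c) :
    (∀ S : Finset (Fin 4), S.card = 2 → feas9 S →
      S = ({0, 1} : Finset (Fin 4)) ∨ S = ({2, 3} : Finset (Fin 4))) ∧
    feas9 ({0, 1} : Finset (Fin 4)) ∧ feas9 ({2, 3} : Finset (Fin 4)) ∧
    (∀ s ∈ ({0, 1} : Finset (Fin 4)), ∀ s' : Fin 4,
      s' ∉ ({0, 1} : Finset (Fin 4)) →
      ¬ feas9 (insert s' (({0, 1} : Finset (Fin 4)).erase s))) ∧
    cost9 c ({0, 1} : Finset (Fin 4)) = c * cost9 c ({2, 3} : Finset (Fin 4)) := by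
  refine ⟨by unfold feas9; decide, by unfold feas9; decide, by unfold feas9; decide,
    by unfold feas9; decide, ?_⟩
  have h1 : ∀ v : Fin 2, ((fun f => dist9 c f v) '' ↑({0, 1} : Finset (Fin 4))) = {c} := by
    intro v
    norm_num [dist9, Set.image_insert_eq]
  have h2 : ∀ v : Fin 2, ((fun f => dist9 c f v) '' ↑({2, 3} : Finset (Fin 4))) = {1} := by
    intro v
    norm_num [dist9, Set.image_insert_eq, show ((2:Fin 4):ℕ) = 2 from rfl,
      show ((3:Fin 4):ℕ) = 3 from rfl]
  simp only [cost9, h1, h2, csInf_singleton, Fin.sum_univ_two]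
  ring
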